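/- Let Γ : D^m → D^n be non-expansive and let I ⊆ D^m be a finite set of pairwise isometric points. If ε_β ≥ 0 for each β ∈ I and ‖∑_{β∈I} ε_β Γ(β)‖ = 1, then ‖∑_{β∈I} ε_β β‖ = 1 and Γ(∑_{β∈I} ε_β β) = ∑_{β∈I} ε_β Γ(β). -/
import Mathlib


open scoped RealInnerProductSpace

theorem stmt4 (n m : ℕ)
    (Γ : EuclideanSpace ℝ (Fin m) → EuclideanSpace ℝ (Fin n))
    (hΓ : ∀ β : EuclideanSpace ℝ (Fin m), ‖β‖ = 1 → ‖Γ β‖ = 1)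
    (hne : ∀ β β' : EuclideanSpace ℝ (Fin m), ‖β‖ = 1 → ‖β'‖ = 1 →
      ‖Γ β - Γ β'‖ ≤ ‖β - β'‖)
    (I : Finset (EuclideanSpace ℝ (Fin m)))
    (hI : ∀ β ∈ I, ‖β‖ = 1)
    (hiso : ∀ β ∈ I, ∀ β' ∈ I, ⟪Γ β, Γ β'⟫ = ⟪β, β'⟫)
    (ε : EuclideanSpace ℝ (Fin m) → ℝ) (hε : ∀ β ∈ I, 0 ≤ ε β)
    (hsum : ‖∑ β ∈ I, ε β • Γ β‖ = 1) :
    ‖∑ β ∈ I, ε β • β‖ = 1 ∧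
    Γ (∑ β ∈ I, ε β • β) = ∑ β ∈ I, ε β • Γ β := by
  set s : EuclideanSpace ℝ (Fin m) := ∑ β ∈ I, ε β • β with hs
  set t : EuclideanSpace ℝ (Fin n) := ∑ β ∈ I, ε β • Γ β with ht
  have hinner : ⟪t, t⟫ = ⟪s, s⟫ := by
    rw [hs, ht, sum_inner, sum_inner]
    refine Finset.sum_congr rfl fun β hβ => ?_
    rw [inner_sum, inner_sum]
    refine Finset.sum_congr rfl fun β' hβ' => ?_
    rw [real_inner_smul_left, real_inner_smul_left, real_inner_smul_right,
      real_inner_smul_right, hiso β hβ β' hβ']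
  have hs1 : ‖s‖ = 1 := by
    have h1 : ‖t‖ ^ 2 = ‖s‖ ^ 2 := by
      rw [← real_inner_self_eq_norm_sq, ← real_inner_self_eq_norm_sq, hinner]
    rw [hsum] at h1
    nlinarith [norm_nonneg s]
  have hΓs : ‖Γ s‖ = 1 := hΓ s hs1
  -- key inequality: ⟪Γ s, Γ β⟫ ≥ ⟪s, β⟫ for β ∈ I
  have hkey : ∀ β ∈ I, ⟪s, β⟫ ≤ ⟪Γ s, Γ β⟫ := by
    intro β hβ
    have h := hne s β hs1 (hI β hβ)
    have h2 : ‖Γ s - Γ β‖ ^ 2 ≤ ‖s - β‖ ^ 2 := by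
      have := norm_nonneg (Γ s - Γ β)
      nlinarith
    rw [norm_sub_sq_real, norm_sub_sq_real, hΓs, hΓ β (hI β hβ), hs1, hI β hβ] at h2
    linarith
  have hst : ⟪Γ s, t⟫ = 1 := by
    have hub : ⟪Γ s, t⟫ ≤ 1 := by
      have := real_inner_le_norm (Γ s) t
      rw [hΓs, hsum] at this
      simpa using this
    have hlb : (1 : ℝ) ≤ ⟪Γ s, t⟫ := by
      have hss : ⟪s, s⟫ = 1 := by
        rw [real_inner_self_eq_norm_sq, hs1]; norm_num
      have e1 : ⟪Γ s, t⟫ = ∑ β ∈ I, ε β * ⟪Γ s, Γ β⟫ := by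
        rw [ht, inner_sum]
        exact Finset.sum_congr rfl fun β hβ => real_inner_smul_right _ _ _
      have e2 : ⟪s, s⟫ = ∑ β ∈ I, ε β * ⟪s, β⟫ := by
        conv_lhs => rw [hs, inner_sum]
        exact Finset.sum_congr rfl fun β hβ => real_inner_smul_right _ _ _
      rw [e1, ← hss, e2]
      exact Finset.sum_le_sum fun β hβ =>
        mul_le_mul_of_nonneg_left (hkey β hβ) (hε β hβ)
    linarith
  refine ⟨hs1, ?_⟩
  have : ‖Γ s - t‖ ^ 2 = 0 := by
    rw [norm_sub_sq_real, hΓs, hsum, hst]; ring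
  have h0 : ‖Γ s - t‖ = 0 := by nlinarith [norm_nonneg (Γ s - t)]
  exact sub_eq_zero.mp (norm_eq_zero.mp h0)
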